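/- arXiv:2303.15637 — 3 statements merged into one kernel-verified Lean document; each statement's English description precedes it below -/
import Mathlib

section
/- In the scalar LQR setting with Q = R = 1, the optimal gain K = −abP/(b^2 P + 1) satisfies K = −bP·a_cl where a_cl = a + bK is the closed-loop coefficient, and |a_cl| < 1. -/
/-- Scalar LQR with `Q = R = 1`: if `P > 0` is the stabilizing solution of the
scalar DARE `P = 1 + a²P − (abP)²/(b²P + 1)`, then the optimal gain
`K = −abP/(b²P + 1)` satisfies `K = −bP·a_cl` where `a_cl = a + bK`, and
`|a_cl| < 1`. -/
theorem scalar_lqr_gain (a b P : ℝ) (hP : 0 < P)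
    (hdare : P = 1 + a ^ 2 * P - (a * b * P) ^ 2 / (b ^ 2 * P + 1)) :
    -(a * b * P) / (b ^ 2 * P + 1)
        = -(b * P) * (a + b * (-(a * b * P) / (b ^ 2 * P + 1)))
    ∧ |a + b * (-(a * b * P) / (b ^ 2 * P + 1))| < 1 := by
  have hd : 0 < b ^ 2 * P + 1 := by positivity
  have hd' : b ^ 2 * P + 1 ≠ 0 := ne_of_gt hd
  have hkey : a ^ 2 * P = (P - 1) * (b ^ 2 * P + 1) := by
    have h := hdare
    field_simp at h
    nlinarith [h]
  have hcl : a + b * (-(a * b * P) / (b ^ 2 * P + 1)) = a / (b ^ 2 * P + 1) := by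
    field_simp
    ring
  constructor
  · rw [hcl]
    field_simp
  · rw [hcl, abs_div, abs_of_pos hd, div_lt_one hd]
    have haux : 0 < (b ^ 2 * P + 1) * (b ^ 2 * P ^ 2 + 1) := by positivity
    have hsq : a ^ 2 < (b ^ 2 * P + 1) ^ 2 := by
      have h2 : a ^ 2 * P < (b ^ 2 * P + 1) ^ 2 * P := by nlinarith
      exact lt_of_mul_lt_mul_right h2 hP.le
    exact abs_lt_of_sq_lt_sq hsq hd.le
end

section
/- Consider the n×n upper bidiagonal matrix A with ρ ∈ (0,1) on the diagonal and 2 on the superdiagonal, B = e_n (the last standard basis vector), Q = I, R = 1. Then the (n,n) entry of P = dare(A,B,Q,R) satisfies P_{nn} ≥ 4^{n−2}. -/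
open Matrix

private lemma inv_fin_one (M : Matrix (Fin 1) (Fin 1) ℝ) : M⁻¹ = (M 0 0)⁻¹ • 1 := by
  rw [Matrix.inv_def, Matrix.det_fin_one, Matrix.adjugate_fin_one, Ring.inverse_eq_inv]

namespace DareAux

noncomputable section

/-- last standard basis vector -/
def ebv (n : ℕ) : Fin n → ℝ := fun i => if (i : ℕ) = n - 1 then 1 else 0

/-- quadratic form of `P` -/
def qf {n : ℕ} (P : Matrix (Fin n) (Fin n) ℝ) (x : Fin n → ℝ) : ℝ := x ⬝ᵥ P.mulVec x

/-- `eₙᵀ P A x` -/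
def fv {n : ℕ} (A P : Matrix (Fin n) (Fin n) ℝ) (x : Fin n → ℝ) : ℝ :=
  ebv n ⬝ᵥ P.mulVec (A.mulVec x)

/-- closed-loop step -/
def wv {n : ℕ} (A P : Matrix (Fin n) (Fin n) ℝ) (c : ℝ) (x : Fin n → ℝ) : Fin n → ℝ :=
  A.mulVec x - (c * fv A P x) • ebv n

/-- iterated closed-loop trajectory starting at `eₙ` -/
def ys {n : ℕ} (A P : Matrix (Fin n) (Fin n) ℝ) (c : ℝ) : ℕ → Fin n → ℝ
  | 0 => ebv n
  | t + 1 => wv A P c (ys A P c t)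

end

end DareAux

open DareAux

/-- For the `n×n` upper bidiagonal matrix `A` with `ρ ∈ (0,1)` on the diagonal and
`2` on the superdiagonal, `B = eₙ`, `Q = I`, `R = 1`, the `(n,n)` entry of the
stabilizing DARE solution `P` satisfies `Pₙₙ ≥ 4^(n−2)`. -/
theorem dare_corner_entry_exponential (n : ℕ) (hn : 2 ≤ n) (ρ : ℝ)
    (hρ0 : 0 < ρ) (hρ1 : ρ < 1)
    (A : Matrix (Fin n) (Fin n) ℝ)
    (hA : A = Matrix.of fun i j : Fin n =>
      if (j : ℕ) = (i : ℕ) then ρ else if (j : ℕ) = (i : ℕ) + 1 then 2 else 0)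
    (B : Matrix (Fin n) (Fin 1) ℝ)
    (hB : B = Matrix.of fun (i : Fin n) (_ : Fin 1) =>
      if (i : ℕ) = n - 1 then (1 : ℝ) else 0)
    (P : Matrix (Fin n) (Fin n) ℝ)
    (hPpsd : P.PosSemidef)
    -- P solves the DARE with Q = I, R = 1
    (hdare : 1 + Aᵀ * P * A
        - Aᵀ * P * B * (Bᵀ * P * B + 1)⁻¹ * (Bᵀ * P * A) = P)
    -- P is the stabilizing solution
    (hstab : spectralRadius ℂ
        ((A + B * (-((Bᵀ * P * B + 1)⁻¹ * (Bᵀ * P * A)))).map (algebraMap ℝ ℂ)) < 1) :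
    (4 : ℝ) ^ (n - 2) ≤ P ⟨n - 1, by omega⟩ ⟨n - 1, by omega⟩ := by
  have him : n - 1 < n := by omega
  have hcond : ∀ i : Fin n, ((i : ℕ) = n - 1) = (i = ⟨n - 1, him⟩) := by
    intro i; apply propext; rw [Fin.ext_iff]
  have hPT : Pᵀ = P := by
    ext i j
    have h := congrFun (congrFun hPpsd.1.eq i) j
    simpa using h
  have hsymm : ∀ u v : Fin n → ℝ, u ⬝ᵥ P.mulVec v = v ⬝ᵥ P.mulVec u := by
    intro u v
    rw [Matrix.dotProduct_mulVec, ← Matrix.mulVec_transpose, hPT, dotProduct_comm]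
  have hq0 : ∀ z, 0 ≤ qf P z := fun z => by simpa [qf] using hPpsd.dotProduct_mulVec_nonneg z
  have hdot0 : ∀ z : Fin n → ℝ, 0 ≤ z ⬝ᵥ z := fun z => by
    simpa using dotProduct_star_self_nonneg z
  have hebdot : ∀ v : Fin n → ℝ, ebv n ⬝ᵥ v = v ⟨n - 1, him⟩ := by
    intro v
    simp only [ebv, dotProduct, hcond, ite_mul, one_mul, zero_mul,
      Finset.sum_ite_eq', Finset.mem_univ, if_true]
  have hqeb : qf P (ebv n) = P ⟨n - 1, him⟩ ⟨n - 1, him⟩ := by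
    rw [qf, hebdot]
    show (fun j => P ⟨n - 1, him⟩ j) ⬝ᵥ ebv n = _
    simp only [ebv, dotProduct, hcond, mul_ite, mul_one, mul_zero,
      Finset.sum_ite_eq', Finset.mem_univ, if_true]
  set b : ℝ := P ⟨n - 1, him⟩ ⟨n - 1, him⟩ with hbdef
  have hb0 : 0 ≤ b := hqeb ▸ hq0 _
  have hb1 : (0 : ℝ) < b + 1 := by linarith
  set c : ℝ := (b + 1)⁻¹ with hcdef
  have hcb : c * (b + 1) = 1 := inv_mul_cancel₀ (ne_of_gt hb1)
  have hc0 : 0 ≤ c := by positivity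
  have hBt : ∀ (i : Fin 1) (j : Fin n), Bᵀ i j = ebv n j := by
    intro i j; rw [hB]; rfl
  -- the 1×1 inverse
  have hBPBval : ((Bᵀ * P * B + 1 : Matrix (Fin 1) (Fin 1) ℝ)) 0 0 = b + 1 := by
    have h1 : (Bᵀ * P * B) 0 0 = b := by
      have e1 : (Bᵀ * P * B) 0 0 = ∑ j, (∑ i, Bᵀ 0 i * P i j) * B j 0 := by
        simp [Matrix.mul_apply]
      rw [e1]
      have e2 : ∀ j, (∑ i, Bᵀ 0 i * P i j) = P ⟨n - 1, him⟩ j := by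
        intro j
        have : (∑ i, Bᵀ 0 i * P i j) = ebv n ⬝ᵥ (fun i => P i j) := by
          apply Finset.sum_congr rfl; intro i _; rw [hBt]
        rw [this, hebdot]
      calc (∑ j, (∑ i, Bᵀ 0 i * P i j) * B j 0)
          = ∑ j, ebv n j * P ⟨n - 1, him⟩ j := by
            apply Finset.sum_congr rfl; intro j _
            rw [e2, hB, mul_comm]; rfl
        _ = (ebv n) ⬝ᵥ (fun j => P ⟨n - 1, him⟩ j) := rfl
        _ = b := by rw [hebdot]
    simp [Matrix.add_apply, h1, Matrix.one_apply]
  have hinv : (Bᵀ * P * B + 1)⁻¹ = c • (1 : Matrix (Fin 1) (Fin 1) ℝ) := by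
    rw [inv_fin_one, hBPBval, hcdef]
  -- key identity I1
  have hI1 : ∀ x : Fin n → ℝ,
      qf P x = x ⬝ᵥ x + qf P (A.mulVec x) - c * (fv A P x) ^ 2 := by
    intro x
    have h := congrArg (fun M : Matrix (Fin n) (Fin n) ℝ => x ⬝ᵥ M.mulVec x) hdare
    rw [hinv] at h
    have hsm : Aᵀ * P * B * (c • (1 : Matrix (Fin 1) (Fin 1) ℝ)) * (Bᵀ * P * A)
        = c • (Aᵀ * P * B * (Bᵀ * P * A)) := by
      rw [Matrix.mul_smul, Matrix.mul_one, Matrix.smul_mul]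
    rw [hsm, Matrix.sub_mulVec, Matrix.add_mulVec, Matrix.one_mulVec,
      Matrix.smul_mulVec, dotProduct_sub, dotProduct_add,
      dotProduct_smul] at h
    have h1 : x ⬝ᵥ (Aᵀ * P * A).mulVec x = qf P (A.mulVec x) := by
      rw [Matrix.mul_assoc, ← Matrix.mulVec_mulVec, Matrix.dotProduct_mulVec,
        Matrix.vecMul_transpose, ← Matrix.mulVec_mulVec]
      rfl
    have hNt : Aᵀ * P * B = (Bᵀ * P * A)ᵀ := by
      rw [Matrix.transpose_mul, Matrix.transpose_mul, Matrix.transpose_transpose, hPT,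
        ← Matrix.mul_assoc]
    have hfval : ∀ i : Fin 1, ((Bᵀ * P * A).mulVec x) i = fv A P x := by
      intro i
      rw [Matrix.mul_assoc, ← Matrix.mulVec_mulVec]
      show (fun j => Bᵀ i j) ⬝ᵥ ((P * A).mulVec x) = _
      rw [funext (hBt i), ← Matrix.mulVec_mulVec]
      rfl
    have h2 : x ⬝ᵥ (Aᵀ * P * B * (Bᵀ * P * A)).mulVec x = (fv A P x) ^ 2 := by
      rw [hNt, ← Matrix.mulVec_mulVec, Matrix.dotProduct_mulVec, Matrix.vecMul_transpose]
      show ((Bᵀ * P * A).mulVec x) ⬝ᵥ ((Bᵀ * P * A).mulVec x) = _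
      rw [show ((Bᵀ * P * A).mulVec x) = fun _ : Fin 1 => fv A P x from funext hfval]
      simp [dotProduct, sq]
    rw [h1, h2] at h
    exact h.symm
  -- key identity I2
  have hI2 : ∀ x : Fin n → ℝ,
      qf P x = x ⬝ᵥ x + qf P (wv A P c x) + c ^ 2 * (fv A P x) ^ 2 := by
    intro x
    have hw : qf P (wv A P c x) = qf P (A.mulVec x)
        - 2 * (c * fv A P x) * fv A P x + (c * fv A P x) ^ 2 * b := by
      show (A.mulVec x - (c * fv A P x) • ebv n) ⬝ᵥ
          P.mulVec (A.mulVec x - (c * fv A P x) • ebv n) = _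
      rw [Matrix.mulVec_sub, Matrix.mulVec_smul, dotProduct_sub,
        sub_dotProduct, sub_dotProduct, dotProduct_smul,
        smul_dotProduct, smul_dotProduct, dotProduct_smul]
      have e1 : ebv n ⬝ᵥ P.mulVec (A.mulVec x) = fv A P x := rfl
      have e2 : (A.mulVec x) ⬝ᵥ P.mulVec (ebv n) = fv A P x := by
        rw [hsymm]; rfl
      have e3 : ebv n ⬝ᵥ P.mulVec (ebv n) = b := hqeb
      rw [e1, e2, e3]
      simp only [smul_eq_mul]
      show qf P (A.mulVec x) - _ - (_ - _) = _
      ring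
    rw [hI1 x, hw]
    have hfx := fv A P x
    linear_combination (-(c * (fv A P x) ^ 2)) * hcb
  -- monotonicity along trajectory
  have hmono : ∀ t, qf P (ys A P c (t + 1)) ≤ qf P (ys A P c t) := by
    intro t
    have h := hI2 (ys A P c t)
    have h1 := hdot0 (ys A P c t)
    have h2 : (0 : ℝ) ≤ c ^ 2 * (fv A P (ys A P c t)) ^ 2 := by positivity
    have h3 : ys A P c (t + 1) = wv A P c (ys A P c t) := rfl
    rw [h3]; linarith
  have hchain : ∀ t, qf P (ys A P c t) ≤ b := by
    intro t
    induction t with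
    | zero => exact le_of_eq hqeb
    | succ t ih => exact le_trans (hmono t) ih
  have hlow : ∀ x : Fin n → ℝ, x ⬝ᵥ x ≤ qf P x := by
    intro x
    have h := hI2 x
    have h1 := hq0 (wv A P c x)
    have h2 : (0 : ℝ) ≤ c ^ 2 * (fv A P x) ^ 2 := by positivity
    linarith
  -- the row formula for A
  have hArow : ∀ (x : Fin n → ℝ) (j : Fin n) (hj : (j : ℕ) + 1 < n),
      (A.mulVec x) j = ρ * x j + 2 * x ⟨(j : ℕ) + 1, hj⟩ := by
    intro x j hj
    have e0 : (A.mulVec x) j = ∑ k, A j k * x k := rfl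
    rw [e0]
    have e1 : ∀ k : Fin n, A j k * x k =
        (if k = j then ρ * x j else 0) + (if k = ⟨(j : ℕ) + 1, hj⟩ then 2 * x ⟨(j : ℕ) + 1, hj⟩ else 0) := by
      intro k
      rw [hA]
      by_cases h1 : k = j
      · subst h1
        have hne : ¬ ((k : ℕ) = (k : ℕ) + 1) := by omega
        simp [hne, Fin.ext_iff]
      · by_cases h2 : k = ⟨(j : ℕ) + 1, hj⟩
        · subst h2
          have hne : ¬ (((j : ℕ) + 1) = (j : ℕ)) := by omega
          simp [hne, Fin.ext_iff, h1]
        · have h1' : ¬ ((k : ℕ) = (j : ℕ)) := fun h => h1 (Fin.ext h)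
          have h2' : ¬ ((k : ℕ) = (j : ℕ) + 1) := fun h => h2 (Fin.ext h)
          simp [h1', h2', h1, h2]
    rw [Finset.sum_congr rfl (fun k _ => e1 k), Finset.sum_add_distrib,
      Finset.sum_ite_eq' Finset.univ, Finset.sum_ite_eq' Finset.univ]
    simp
  -- support and growth of the trajectory
  have hsupp : ∀ t, t ≤ n - 1 →
      (∀ j : Fin n, (j : ℕ) < n - 1 - t → ys A P c t j = 0) ∧
      ys A P c t ⟨n - 1 - t, by omega⟩ = 2 ^ t := by
    intro t
    induction t with
    | zero =>
      intro _
      refine ⟨fun j hj => ?_, ?_⟩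
      · show ebv n j = 0
        have : ¬ ((j : ℕ) = n - 1) := by omega
        simp [ebv, this]
      · show ebv n ⟨n - 1 - 0, by omega⟩ = 2 ^ 0
        simp [ebv]
    | succ t ih =>
      intro ht
      obtain ⟨ih1, ih2⟩ := ih (by omega)
      have hstep : ∀ (j : Fin n) (hj : (j : ℕ) < n - 1),
          ys A P c (t + 1) j
            = ρ * ys A P c t j + 2 * ys A P c t ⟨(j : ℕ) + 1, by omega⟩ := by
        intro j hj
        have h3 : ys A P c (t + 1) j = (A.mulVec (ys A P c t)) j
            - (c * fv A P (ys A P c t)) * ebv n j := rfl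
        have he : ebv n j = 0 := by
          have : ¬ ((j : ℕ) = n - 1) := by omega
          simp [ebv, this]
        rw [h3, he, mul_zero, sub_zero, hArow _ j (by omega)]
      refine ⟨fun j hj => ?_, ?_⟩
      · rw [hstep j (by omega), ih1 j (by omega), ih1 ⟨(j : ℕ) + 1, by omega⟩ (by
          show (j : ℕ) + 1 < n - 1 - t
          omega)]
        ring
      · rw [hstep ⟨n - 1 - (t + 1), by omega⟩ (by
          show n - 1 - (t + 1) < n - 1
          omega)]
        rw [ih1 ⟨n - 1 - (t + 1), by omega⟩ (by
          show n - 1 - (t + 1) < n - 1 - t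
          omega)]
        have hidx : (⟨(n - 1 - (t + 1) : ℕ) + 1, by omega⟩ : Fin n)
            = ⟨n - 1 - t, by omega⟩ := by
          apply Fin.ext
          show (n - 1 - (t + 1) : ℕ) + 1 = n - 1 - t
          omega
        rw [hidx, ih2, pow_succ]
        ring
  -- conclusion
  obtain ⟨h1, h2⟩ := hsupp (n - 2) (by omega)
  set v : Fin n → ℝ := ys A P c (n - 2) with hv
  have hsq : (4 : ℝ) ^ (n - 2) ≤ v ⬝ᵥ v := by
    have hco : v ⟨n - 1 - (n - 2), by omega⟩ = 2 ^ (n - 2) := h2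
    have h4 : ((2 : ℝ) ^ (n - 2)) ^ 2 = (4 : ℝ) ^ (n - 2) := by
      rw [show (4 : ℝ) = 2 ^ 2 by norm_num, ← pow_mul, ← pow_mul, Nat.mul_comm]
    have hterm : v ⟨n - 1 - (n - 2), by omega⟩ * v ⟨n - 1 - (n - 2), by omega⟩
        ≤ ∑ i, v i * v i :=
      Finset.single_le_sum (f := fun i => v i * v i)
        (fun i _ => mul_self_nonneg _) (Finset.mem_univ _)
    calc (4 : ℝ) ^ (n - 2) = ((2 : ℝ) ^ (n - 2)) ^ 2 := h4.symm
      _ = v ⟨n - 1 - (n - 2), by omega⟩ * v ⟨n - 1 - (n - 2), by omega⟩ := by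
          rw [hco]; ring
      _ ≤ ∑ i, v i * v i := hterm
      _ = v ⬝ᵥ v := rfl
  exact le_trans hsq (le_trans (hlow v) (hchain (n - 2)))
end

section
/- Let A_cl be Schur stable with 𝒥(A_cl) := Σ_{t=0}^∞ ||A_cl^t||^2 < ∞, and let K, K̂ satisfy ||K̂ − K|| ≤ min{||A_cl||/||B||, 1/(6 𝒥(A_cl) ||B|| ||A_cl||)} where A_cl = A + BK. Define P_1^0 = P_2^0 = Σ_W and recursions P_1^t = (A+BK̂)P_1^{t−1}(A+BK̂)^T + Σ_W, P_2^t = A_cl P_2^{t−1} A_cl^T + Σ_W. Then (1/T)|| Σ_{t=0}^{T−1} (P_1^t − P_2^t) || ≤ 6 𝒥(A_cl) ||B|| ||A_cl|| ||Σ_X|| ||K̂ − K||, where Σ_X = dlyap(A_cl^T, Σ_W). -/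
open Matrix

/-- The spectral (operator) norm of a real matrix. -/
noncomputable def specNorm {m n : ℕ} (M : Matrix (Fin m) (Fin n) ℝ) : ℝ :=
  ‖LinearMap.toContinuousLinearMap (Matrix.toEuclideanLin M)‖

namespace LyapAux

open scoped Matrix.Norms.L2Operator RealInnerProductSpace

lemma specNorm_eq {m n : ℕ} (M : Matrix (Fin m) (Fin n) ℝ) : specNorm M = ‖M‖ := rfl

lemma norm_transpose {m n : ℕ} (M : Matrix (Fin m) (Fin n) ℝ) : ‖Mᵀ‖ = ‖M‖ := by
  rw [← Matrix.conjTranspose_eq_transpose_of_trivial, Matrix.l2_opNorm_conjTranspose]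

lemma eunorm_sq {n : ℕ} (v : Fin n → ℝ) :
    ‖(EuclideanSpace.equiv (Fin n) ℝ).symm v‖ ^ 2 = v ⬝ᵥ v := by
  rw [EuclideanSpace.norm_eq, Real.sq_sqrt (by positivity)]
  simp [dotProduct, sq]

lemma dot_le {n : ℕ} (v w : Fin n → ℝ) :
    v ⬝ᵥ w ≤ ‖(EuclideanSpace.equiv (Fin n) ℝ).symm v‖ * ‖(EuclideanSpace.equiv (Fin n) ℝ).symm w‖ := by
  have h1 := abs_real_inner_le_norm ((EuclideanSpace.equiv (Fin n) ℝ).symm v)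
    ((EuclideanSpace.equiv (Fin n) ℝ).symm w)
  have h2 : ⟪(EuclideanSpace.equiv (Fin n) ℝ).symm v, (EuclideanSpace.equiv (Fin n) ℝ).symm w⟫ = v ⬝ᵥ w := by
    simp [inner, dotProduct, mul_comm]
  calc v ⬝ᵥ w ≤ |v ⬝ᵥ w| := le_abs_self _
    _ ≤ _ := by rw [← h2]; exact h1

lemma opnorm_le_of_mulVec {n m : ℕ} (M : Matrix (Fin m) (Fin n) ℝ) {c : ℝ} (hc : 0 ≤ c)
    (h : ∀ x : Fin n → ℝ, ‖(EuclideanSpace.equiv (Fin m) ℝ).symm (M *ᵥ x)‖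
      ≤ c * ‖(EuclideanSpace.equiv (Fin n) ℝ).symm x‖) : ‖M‖ ≤ c := by
  rw [Matrix.l2_opNorm_def]
  apply ContinuousLinearMap.opNorm_le_bound _ hc
  intro x
  have := h ((EuclideanSpace.equiv (Fin n) ℝ) x)
  simp [Matrix.toEuclideanLin_apply] at this ⊢; exact this

lemma quad_eq_normsq {n : ℕ} (C : Matrix (Fin n) (Fin n) ℝ) (x : Fin n → ℝ) :
    x ⬝ᵥ ((Cᴴ * C) *ᵥ x) = ‖(EuclideanSpace.equiv (Fin n) ℝ).symm (C *ᵥ x)‖ ^ 2 := by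
  rw [eunorm_sq, ← Matrix.mulVec_mulVec, Matrix.conjTranspose_eq_transpose_of_trivial,
    Matrix.dotProduct_mulVec, Matrix.vecMul_transpose]

/-- Spectral norm is monotone w.r.t. quadratic forms for PSD matrices. -/
lemma norm_le_of_quad {n : ℕ} {M N : Matrix (Fin n) (Fin n) ℝ} (hM : M.PosSemidef)
    (h : ∀ x : Fin n → ℝ, x ⬝ᵥ (M *ᵥ x) ≤ x ⬝ᵥ (N *ᵥ x)) : ‖M‖ ≤ ‖N‖ := by
  obtain ⟨C, rfl⟩ : ∃ C : Matrix (Fin n) (Fin n) ℝ, M = Cᴴ * C := by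
    open scoped MatrixOrder in exact CStarAlgebra.nonneg_iff_eq_star_mul_self.mp hM.nonneg
  rw [Matrix.l2_opNorm_conjTranspose_mul_self]
  have hN : (0:ℝ) ≤ ‖N‖ := norm_nonneg _
  have hC : ‖C‖ ≤ Real.sqrt ‖N‖ := by
    apply opnorm_le_of_mulVec _ (Real.sqrt_nonneg _)
    intro x
    have h1 : ‖(EuclideanSpace.equiv (Fin n) ℝ).symm (C *ᵥ x)‖ ^ 2
        ≤ ‖N‖ * ‖(EuclideanSpace.equiv (Fin n) ℝ).symm x‖ ^ 2 := by
      rw [← quad_eq_normsq]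
      calc x ⬝ᵥ ((Cᴴ * C) *ᵥ x) ≤ x ⬝ᵥ (N *ᵥ x) := h x
        _ ≤ ‖(EuclideanSpace.equiv (Fin n) ℝ).symm x‖ * ‖(EuclideanSpace.equiv (Fin n) ℝ).symm (N *ᵥ x)‖ := by
            have := dot_le x (N *ᵥ x); linarith [this]
        _ ≤ ‖(EuclideanSpace.equiv (Fin n) ℝ).symm x‖ * (‖N‖ * ‖(EuclideanSpace.equiv (Fin n) ℝ).symm x‖) := by
            apply mul_le_mul_of_nonneg_left _ (norm_nonneg _)
            exact Matrix.l2_opNorm_mulVec N ((EuclideanSpace.equiv (Fin n) ℝ).symm x)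
        _ = ‖N‖ * ‖(EuclideanSpace.equiv (Fin n) ℝ).symm x‖ ^ 2 := by ring
    have h2 : (0:ℝ) ≤ ‖(EuclideanSpace.equiv (Fin n) ℝ).symm (C *ᵥ x)‖ := norm_nonneg _
    have h3 : ‖(EuclideanSpace.equiv (Fin n) ℝ).symm (C *ᵥ x)‖ ^ 2
        ≤ (Real.sqrt ‖N‖ * ‖(EuclideanSpace.equiv (Fin n) ℝ).symm x‖) ^ 2 := by
      rw [mul_pow, Real.sq_sqrt hN]; exact h1
    exact (pow_le_pow_iff_left₀ h2 (by positivity) (by norm_num)).mp h3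
  calc ‖C‖ * ‖C‖ ≤ Real.sqrt ‖N‖ * Real.sqrt ‖N‖ :=
      mul_le_mul hC hC (norm_nonneg _) (Real.sqrt_nonneg _)
    _ = ‖N‖ := Real.mul_self_sqrt hN

/-- The quadratic form `M ↦ x ⬝ᵥ M *ᵥ x` as a continuous linear map. -/
noncomputable def quadCLM {n : ℕ} (x : Fin n → ℝ) : Matrix (Fin n) (Fin n) ℝ →L[ℝ] ℝ :=
  LinearMap.toContinuousLinearMap
  { toFun := fun M => x ⬝ᵥ (M *ᵥ x)
    map_add' := fun M N => by rw [Matrix.add_mulVec, dotProduct_add]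
    map_smul' := fun c M => by rw [Matrix.smul_mulVec, dotProduct_smul]; rfl }

@[simp] lemma quadCLM_apply {n : ℕ} (x : Fin n → ℝ) (M : Matrix (Fin n) (Fin n) ℝ) :
    quadCLM x M = x ⬝ᵥ (M *ᵥ x) := rfl

lemma arith1 (J a d S : ℝ) (hJ : 0 ≤ J) (ha : 0 ≤ a) (hd : 0 ≤ d) (hS : 0 ≤ S)
    (hc : 6 * J * a * d ≤ 1) :
    J * (3 * a * d * (S + 6 * J * a * d * S)) ≤ 6 * J * a * d * S := by
  nlinarith [hc, mul_nonneg (mul_nonneg (mul_nonneg hJ ha) hd) hS]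

lemma arith2 (J a b S d e : ℝ) (hJ : 0 ≤ J) (ha : 0 ≤ a) (hS : 0 ≤ S) (hd : d ≤ b * e) :
    6 * J * a * d * S ≤ 6 * J * b * a * S * e := by
  nlinarith [hd, mul_nonneg (mul_nonneg (mul_nonneg hJ ha) hS) (show (0:ℝ) ≤ 6 by norm_num)]

lemma norm_mul3 {n : ℕ} (X Y Z : Matrix (Fin n) (Fin n) ℝ) : ‖X * Y * Z‖ ≤ ‖X‖ * ‖Y‖ * ‖Z‖ :=
  (norm_mul_le _ _).trans (mul_le_mul_of_nonneg_right (norm_mul_le _ _) (norm_nonneg _))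

theorem main (nx nu : ℕ)
    (A SigW : Matrix (Fin nx) (Fin nx) ℝ) (B : Matrix (Fin nx) (Fin nu) ℝ)
    (K Khat : Matrix (Fin nu) (Fin nx) ℝ)
    (hSigW : SigW.PosDef)
    (hJ : Summable (fun t : ℕ => specNorm ((A + B * K) ^ t) ^ 2))
    (hgap : specNorm (Khat - K)
      ≤ min (specNorm (A + B * K) / specNorm B)
          (1 / (6 * (∑' t : ℕ, specNorm ((A + B * K) ^ t) ^ 2)
            * specNorm B * specNorm (A + B * K))))
    (P₁ P₂ : ℕ → Matrix (Fin nx) (Fin nx) ℝ)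
    (hP₁0 : P₁ 0 = SigW) (hP₂0 : P₂ 0 = SigW)
    (hP₁ : ∀ t, P₁ (t + 1) = (A + B * Khat) * P₁ t * (A + B * Khat)ᵀ + SigW)
    (hP₂ : ∀ t, P₂ (t + 1) = (A + B * K) * P₂ t * (A + B * K)ᵀ + SigW)
    (T : ℕ) :
    (1 / (T : ℝ)) * specNorm (∑ t ∈ Finset.range T, (P₁ t - P₂ t))
      ≤ 6 * (∑' t : ℕ, specNorm ((A + B * K) ^ t) ^ 2)
          * specNorm B * specNorm (A + B * K)
          * specNorm (∑' k : ℕ, (A + B * K) ^ k * SigW * ((A + B * K)ᵀ) ^ k)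
          * specNorm (Khat - K) := by
  haveI : CompleteSpace (Matrix (Fin nx) (Fin nx) ℝ) := inferInstance
  simp only [specNorm_eq] at hJ hgap ⊢
  set Acl := A + B * K with hAcldef
  set J := ∑' t : ℕ, ‖Acl ^ t‖ ^ 2 with hJdef
  set SigX := ∑' k : ℕ, Acl ^ k * SigW * (Aclᵀ) ^ k with hSigXdef
  set S := ‖SigX‖ with hSdef
  set ε := ‖Khat - K‖ with hεdef
  have hJnn : 0 ≤ J := tsum_nonneg fun t => sq_nonneg _
  have hSnn : 0 ≤ S := norm_nonneg _
  have hεnn : 0 ≤ ε := norm_nonneg _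
  have hRHSnn : 0 ≤ 6 * J * ‖B‖ * ‖Acl‖ * S * ε := by positivity
  -- degenerate case
  rcases eq_or_lt_of_le (show (0:ℝ) ≤ 6 * J * ‖B‖ * ‖Acl‖ by positivity) with hzero | hpos
  · have hε0 : ε = 0 := by
      have h2 := (le_min_iff.mp hgap).2
      rw [← hzero] at h2
      simp only [div_zero] at h2
      exact le_antisymm h2 hεnn
    have hKK : Khat = K := by
      have := norm_eq_zero.mp hε0
      exact sub_eq_zero.mp this
    have hPP : ∀ t, P₁ t = P₂ t := by
      intro t
      induction t with
      | zero => rw [hP₁0, hP₂0]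
      | succ t ih => rw [hP₁ t, hP₂ t, ih, hKK]
    have : ∑ t ∈ Finset.range T, (P₁ t - P₂ t) = 0 := by
      apply Finset.sum_eq_zero; intro t _; rw [hPP t, sub_self]
    rw [this, norm_zero, mul_zero]
    exact hRHSnn
  -- main case
  have hBpos : 0 < ‖B‖ := by
    rcases lt_or_eq_of_le (norm_nonneg B) with h | h; · exact h
    exfalso; rw [← h] at hpos; nlinarith
  have hApos : 0 < ‖Acl‖ := by
    rcases lt_or_eq_of_le (norm_nonneg Acl) with h | h; · exact h
    exfalso; rw [← h] at hpos; nlinarith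
  have hJpos : 0 < J := by
    rcases lt_or_eq_of_le hJnn with h | h; · exact h
    exfalso; rw [← h] at hpos; nlinarith
  set Δ := B * (Khat - K) with hΔdef
  set δ := ‖Δ‖ with hδdef
  have hδnn : 0 ≤ δ := norm_nonneg _
  have hδB : δ ≤ ‖B‖ * ε := Matrix.l2_opNorm_mul _ _
  have hεA : ε ≤ ‖Acl‖ / ‖B‖ := (le_min_iff.mp hgap).1
  have hδA : δ ≤ ‖Acl‖ := by
    calc δ ≤ ‖B‖ * ε := hδB
      _ ≤ ‖B‖ * (‖Acl‖ / ‖B‖) := by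
          exact mul_le_mul_of_nonneg_left hεA (le_of_lt hBpos)
      _ = ‖Acl‖ := by field_simp
  have hc : 6 * J * ‖Acl‖ * δ ≤ 1 := by
    have h2 : ε ≤ 1 / (6 * J * ‖B‖ * ‖Acl‖) := (le_min_iff.mp hgap).2
    have h3 : (6 * J * ‖B‖ * ‖Acl‖) * ε ≤ 1 := by
      rw [le_div_iff₀ hpos] at h2; linarith [h2]
    have h6 : (0:ℝ) ≤ 6 * J * ‖Acl‖ := by
      have := mul_nonneg (mul_nonneg (by norm_num : (0:ℝ) ≤ 6) hJnn) hApos.le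
      linarith
    have h4 := mul_le_mul_of_nonneg_left hδB h6
    calc 6 * J * ‖Acl‖ * δ ≤ 6 * J * ‖Acl‖ * (‖B‖ * ε) := h4
      _ = 6 * J * ‖B‖ * ‖Acl‖ * ε := by ring
      _ ≤ 1 := h3
  -- the summand of SigX
  have hnormf : ∀ k : ℕ, ‖Acl ^ k * SigW * (Aclᵀ) ^ k‖ ≤ ‖Acl ^ k‖ ^ 2 * ‖SigW‖ := by
    intro k
    have h1 : ‖(Aclᵀ) ^ k‖ = ‖Acl ^ k‖ := by rw [← Matrix.transpose_pow, norm_transpose]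
    calc ‖Acl ^ k * SigW * (Aclᵀ) ^ k‖ ≤ ‖Acl ^ k‖ * ‖SigW‖ * ‖(Aclᵀ) ^ k‖ := norm_mul3 _ _ _
      _ = ‖Acl ^ k‖ ^ 2 * ‖SigW‖ := by rw [h1]; ring
  have hsummf : Summable (fun k : ℕ => Acl ^ k * SigW * (Aclᵀ) ^ k) :=
    Summable.of_norm_bounded (hJ.mul_right ‖SigW‖) hnormf
  have hfpsd : ∀ k : ℕ, (Acl ^ k * SigW * (Aclᵀ) ^ k).PosSemidef := by
    intro k
    have := hSigW.posSemidef.mul_mul_conjTranspose_same (Acl ^ k)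
    rwa [Matrix.conjTranspose_eq_transpose_of_trivial, Matrix.transpose_pow] at this
  have hP2closed : ∀ t, P₂ t = ∑ k ∈ Finset.range (t + 1), Acl ^ k * SigW * (Aclᵀ) ^ k := by
    intro t
    induction t with
    | zero => rw [hP₂0]; simp
    | succ t ih =>
      have hterm : ∀ k : ℕ, Acl * (Acl ^ k * SigW * (Aclᵀ) ^ k) * Aclᵀ
          = Acl ^ (k+1) * SigW * (Aclᵀ) ^ (k+1) := by
        intro k
        rw [pow_succ', pow_succ]
        simp only [mul_assoc]
      rw [hP₂ t, ih, Finset.mul_sum, Finset.sum_mul]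
      simp only [hterm]
      rw [Finset.sum_range_succ' (fun k => Acl ^ k * SigW * (Aclᵀ) ^ k) (t + 1)]
      simp only [pow_zero, one_mul, mul_one]
  have hP2psd : ∀ t, (P₂ t).PosSemidef := by
    intro t
    rw [hP2closed t]
    exact Finset.sum_induction _ _ (fun a b ha hb => ha.add hb) Matrix.PosSemidef.zero
      (fun k _ => hfpsd k)
  have hquadP2 : ∀ t (x : Fin nx → ℝ), x ⬝ᵥ (P₂ t *ᵥ x) ≤ x ⬝ᵥ (SigX *ᵥ x) := by
    intro t x
    have htail : Summable (fun k => Acl ^ (k + (t+1)) * SigW * (Aclᵀ) ^ (k + (t+1))) :=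
      ((summable_nat_add_iff (f := fun k : ℕ => Acl ^ k * SigW * (Aclᵀ) ^ k) (t+1)).2 hsummf)
    have hsplit : (∑ k ∈ Finset.range (t+1), Acl ^ k * SigW * (Aclᵀ) ^ k)
        + ∑' k : ℕ, Acl ^ (k + (t+1)) * SigW * (Aclᵀ) ^ (k + (t+1)) = SigX :=
      Summable.sum_add_tsum_nat_add (f := fun k : ℕ => Acl ^ k * SigW * (Aclᵀ) ^ k) (t+1) hsummf
    rw [← hsplit, hP2closed t, Matrix.add_mulVec, dotProduct_add, le_add_iff_nonneg_right]
    have hmap : x ⬝ᵥ ((∑' k : ℕ, Acl ^ (k + (t+1)) * SigW * (Aclᵀ) ^ (k + (t+1))) *ᵥ x)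
        = ∑' k : ℕ, x ⬝ᵥ ((Acl ^ (k + (t+1)) * SigW * (Aclᵀ) ^ (k + (t+1))) *ᵥ x) := by
      have := (quadCLM x).map_tsum htail
      simpa using this
    rw [hmap]
    apply tsum_nonneg
    intro k
    have := (hfpsd (k + (t+1))).dotProduct_mulVec_nonneg x
    simpa using this
  have hP2S : ∀ t, ‖P₂ t‖ ≤ S := fun t => norm_le_of_quad (hP2psd t) (hquadP2 t)
  -- nonnegativity bookkeeping
  have hq2 : (0:ℝ) ≤ 6 * J * ‖Acl‖ * δ * S := by
    have h1 : (0:ℝ) ≤ 6 * J := by linarith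
    have h2 : (0:ℝ) ≤ 6 * J * ‖Acl‖ := mul_nonneg h1 hApos.le
    have h3 : (0:ℝ) ≤ 6 * J * ‖Acl‖ * δ := mul_nonneg h2 hδnn
    exact mul_nonneg h3 hSnn
  have hq1 : (0:ℝ) ≤ 3 * ‖Acl‖ * δ :=
    mul_nonneg (mul_nonneg (by norm_num) hApos.le) hδnn
  have hq3 : (0:ℝ) ≤ S + 6 * J * ‖Acl‖ * δ * S := add_nonneg hSnn hq2
  have hq4 : (0:ℝ) ≤ 3 * ‖Acl‖ * δ * (S + 6 * J * ‖Acl‖ * δ * S) := mul_nonneg hq1 hq3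
  -- perturbation decomposition
  have hA1 : A + B * Khat = Acl + Δ := by
    rw [hΔdef, Matrix.mul_sub, hAcldef]
    abel
  set F : ℕ → Matrix (Fin nx) (Fin nx) ℝ :=
    fun u => Δ * P₁ u * (Acl + Δ)ᵀ + Acl * P₁ u * Δᵀ with hFdef
  have hDrec : ∀ t, P₁ (t + 1) - P₂ (t + 1) = Acl * (P₁ t - P₂ t) * Aclᵀ + F t := by
    intro t
    rw [hP₁ t, hP₂ t, hA1, hFdef]
    simp only [Matrix.transpose_add]
    noncomm_ring
  have hDclosed : ∀ t, P₁ t - P₂ t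
      = ∑ s ∈ Finset.range t, Acl ^ s * F (t - 1 - s) * (Aclᵀ) ^ s := by
    intro t
    induction t with
    | zero => simp [hP₁0, hP₂0]
    | succ t ih =>
      rw [hDrec t, ih, Finset.mul_sum, Finset.sum_mul]
      have hterm : ∀ s : ℕ, Acl * (Acl ^ s * F (t - 1 - s) * (Aclᵀ) ^ s) * Aclᵀ
          = Acl ^ (s + 1) * F (t - 1 - s) * (Aclᵀ) ^ (s + 1) := by
        intro s
        rw [pow_succ', pow_succ]
        simp only [mul_assoc]
      simp only [hterm]
      rw [Finset.sum_range_succ' (fun s => Acl ^ s * F (t + 1 - 1 - s) * (Aclᵀ) ^ s) t]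
      have hidx : ∀ s : ℕ, t + 1 - 1 - (s + 1) = t - 1 - s := by intro s; omega
      have h0 : t + 1 - 1 - 0 = t := by omega
      simp only [hidx, h0, pow_zero, one_mul, mul_one]
  have hA1n : ‖(Acl + Δ)ᵀ‖ ≤ 2 * ‖Acl‖ := by
    rw [norm_transpose]
    calc ‖Acl + Δ‖ ≤ ‖Acl‖ + ‖Δ‖ := norm_add_le _ _
      _ ≤ 2 * ‖Acl‖ := by linarith [hδA]
  have hFbound : ∀ u, ‖F u‖ ≤ 3 * ‖Acl‖ * δ * ‖P₁ u‖ := by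
    intro u
    have h1 : ‖Δ * P₁ u * (Acl + Δ)ᵀ‖ ≤ δ * ‖P₁ u‖ * (2 * ‖Acl‖) := by
      calc ‖Δ * P₁ u * (Acl + Δ)ᵀ‖ ≤ ‖Δ‖ * ‖P₁ u‖ * ‖(Acl + Δ)ᵀ‖ := norm_mul3 _ _ _
        _ ≤ δ * ‖P₁ u‖ * (2 * ‖Acl‖) :=
            mul_le_mul_of_nonneg_left hA1n (mul_nonneg hδnn (norm_nonneg _))
    have h2 : ‖Acl * P₁ u * Δᵀ‖ ≤ ‖Acl‖ * ‖P₁ u‖ * δ := by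
      have h3 := norm_mul3 Acl (P₁ u) Δᵀ
      rwa [norm_transpose] at h3
    calc ‖F u‖ ≤ ‖Δ * P₁ u * (Acl + Δ)ᵀ‖ + ‖Acl * P₁ u * Δᵀ‖ := norm_add_le _ _
      _ ≤ δ * ‖P₁ u‖ * (2 * ‖Acl‖) + ‖Acl‖ * ‖P₁ u‖ * δ := add_le_add h1 h2
      _ = 3 * ‖Acl‖ * δ * ‖P₁ u‖ := by ring
  set nA := ‖Acl‖ with hnAdef
  set nB := ‖B‖ with hnBdef
  clear_value nA nB Acl J SigX S ε Δ δ F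
  have key : ∀ t, ‖P₁ t - P₂ t‖ ≤ 6 * J * nA * δ * S := by
    intro t
    induction t using Nat.strong_induction_on with
    | _ t ih =>
      rcases Nat.eq_zero_or_pos t with rfl | ht
      · rw [hP₁0, hP₂0, sub_self, norm_zero]
        exact hq2
      · rw [hDclosed t]
        have hbound : ∀ s ∈ Finset.range t, ‖Acl ^ s * F (t - 1 - s) * (Aclᵀ) ^ s‖
            ≤ ‖Acl ^ s‖ ^ 2 * (3 * nA * δ * (S + 6 * J * nA * δ * S)) := by
          intro s hs
          have hu : t - 1 - s < t := by omega
          have hP1u : ‖P₁ (t - 1 - s)‖ ≤ S + 6 * J * nA * δ * S := by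
            have h5 : P₂ (t - 1 - s) + (P₁ (t - 1 - s) - P₂ (t - 1 - s)) = P₁ (t - 1 - s) := by
              abel
            calc ‖P₁ (t - 1 - s)‖
                = ‖P₂ (t - 1 - s) + (P₁ (t - 1 - s) - P₂ (t - 1 - s))‖ := by rw [h5]
              _ ≤ ‖P₂ (t - 1 - s)‖ + ‖P₁ (t - 1 - s) - P₂ (t - 1 - s)‖ := norm_add_le _ _
              _ ≤ S + 6 * J * nA * δ * S := add_le_add (hP2S _) (ih _ hu)
          have hnt : ‖(Aclᵀ) ^ s‖ = ‖Acl ^ s‖ := by rw [← Matrix.transpose_pow, norm_transpose]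
          calc ‖Acl ^ s * F (t - 1 - s) * (Aclᵀ) ^ s‖
              ≤ ‖Acl ^ s‖ * ‖F (t - 1 - s)‖ * ‖(Aclᵀ) ^ s‖ := norm_mul3 _ _ _
            _ = ‖Acl ^ s‖ ^ 2 * ‖F (t - 1 - s)‖ := by rw [hnt]; ring
            _ ≤ ‖Acl ^ s‖ ^ 2 * (3 * nA * δ * (S + 6 * J * nA * δ * S)) := by
                apply mul_le_mul_of_nonneg_left _ (sq_nonneg _)
                calc ‖F (t - 1 - s)‖ ≤ 3 * nA * δ * ‖P₁ (t - 1 - s)‖ := hFbound _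
                  _ ≤ 3 * nA * δ * (S + 6 * J * nA * δ * S) :=
                      mul_le_mul_of_nonneg_left hP1u hq1
        calc ‖∑ s ∈ Finset.range t, Acl ^ s * F (t - 1 - s) * (Aclᵀ) ^ s‖
            ≤ ∑ s ∈ Finset.range t, ‖Acl ^ s * F (t - 1 - s) * (Aclᵀ) ^ s‖ := norm_sum_le _ _
          _ ≤ ∑ s ∈ Finset.range t, ‖Acl ^ s‖ ^ 2 * (3 * nA * δ * (S + 6 * J * nA * δ * S)) :=
              Finset.sum_le_sum hbound
          _ = (∑ s ∈ Finset.range t, ‖Acl ^ s‖ ^ 2)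
              * (3 * nA * δ * (S + 6 * J * nA * δ * S)) := by rw [← Finset.sum_mul]
          _ ≤ J * (3 * nA * δ * (S + 6 * J * nA * δ * S)) := by
              have hpart : (∑ s ∈ Finset.range t, ‖Acl ^ s‖ ^ 2) ≤ J := by
                rw [hJdef]
                exact Summable.sum_le_tsum (f := fun s : ℕ => ‖Acl ^ s‖ ^ 2) (Finset.range t)
                  (fun i _ => sq_nonneg _) hJ
              exact mul_le_mul_of_nonneg_right hpart hq4
          _ ≤ 6 * J * nA * δ * S := arith1 J nA δ S hJnn hApos.le hδnn hSnn hc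
  rcases Nat.eq_zero_or_pos T with rfl | hT
  · rw [Finset.range_zero, Finset.sum_empty, norm_zero, mul_zero]
    exact hRHSnn
  · have hsum : ‖∑ t ∈ Finset.range T, (P₁ t - P₂ t)‖ ≤ T * (6 * J * nA * δ * S) := by
      calc ‖∑ t ∈ Finset.range T, (P₁ t - P₂ t)‖
          ≤ ∑ t ∈ Finset.range T, ‖P₁ t - P₂ t‖ := norm_sum_le _ _
        _ ≤ ∑ _t ∈ Finset.range T, (6 * J * nA * δ * S) :=
            Finset.sum_le_sum (fun t _ => key t)
        _ = T * (6 * J * nA * δ * S) := by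
            rw [Finset.sum_const, Finset.card_range, nsmul_eq_mul]
    have hTpos : (0:ℝ) < (T:ℝ) := by exact_mod_cast hT
    calc (1 / (T:ℝ)) * ‖∑ t ∈ Finset.range T, (P₁ t - P₂ t)‖
        ≤ (1 / (T:ℝ)) * ((T:ℝ) * (6 * J * nA * δ * S)) :=
          mul_le_mul_of_nonneg_left hsum (by positivity)
      _ = 6 * J * nA * δ * S := by field_simp
      _ ≤ 6 * J * nB * nA * S * ε := arith2 J nA nB S δ ε hJnn hApos.le hSnn hδB

end LyapAux

/-- Lyapunov recursion perturbation bound: if `‖K̂ − K‖` is small enough, the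
partial covariance recursions under `K̂` and `K` stay close, with
`(1/T)‖∑ₜ (P₁ᵗ − P₂ᵗ)‖ ≤ 6 𝒥(A_cl) ‖B‖ ‖A_cl‖ ‖Σ_X‖ ‖K̂ − K‖`. -/
theorem lyapunov_recursion_perturbation (nx nu : ℕ)
    (A SigW : Matrix (Fin nx) (Fin nx) ℝ) (B : Matrix (Fin nx) (Fin nu) ℝ)
    (K Khat : Matrix (Fin nu) (Fin nx) ℝ)
    (hSigW : SigW.PosDef)
    (hρ : spectralRadius ℂ ((A + B * K).map (algebraMap ℝ ℂ)) < 1)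
    (hJ : Summable (fun t : ℕ => specNorm ((A + B * K) ^ t) ^ 2))
    (hgap : specNorm (Khat - K)
      ≤ min (specNorm (A + B * K) / specNorm B)
          (1 / (6 * (∑' t : ℕ, specNorm ((A + B * K) ^ t) ^ 2)
            * specNorm B * specNorm (A + B * K))))
    (P₁ P₂ : ℕ → Matrix (Fin nx) (Fin nx) ℝ)
    (hP₁0 : P₁ 0 = SigW) (hP₂0 : P₂ 0 = SigW)
    (hP₁ : ∀ t, P₁ (t + 1) = (A + B * Khat) * P₁ t * (A + B * Khat)ᵀ + SigW)
    (hP₂ : ∀ t, P₂ (t + 1) = (A + B * K) * P₂ t * (A + B * K)ᵀ + SigW)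
    (T : ℕ) :
    (1 / (T : ℝ)) * specNorm (∑ t ∈ Finset.range T, (P₁ t - P₂ t))
      ≤ 6 * (∑' t : ℕ, specNorm ((A + B * K) ^ t) ^ 2)
          * specNorm B * specNorm (A + B * K)
          * specNorm (∑' k : ℕ, (A + B * K) ^ k * SigW * ((A + B * K)ᵀ) ^ k)
          * specNorm (Khat - K) := by
  exact LyapAux.main nx nu A SigW B K Khat hSigW hJ hgap P₁ P₂ hP₁0 hP₂0 hP₁ hP₂ T
end
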